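/- For every integer k ≥ 0 and all complex numbers x_1,…,x_{2k}, one has ∑_{j=0}^{2k} (−1)^j s_j(x) s_{2k−j}(x) = s_k(v), where v = (2x_2, 2x_4, …, 2x_{2k}) is the sequence of doubled even-indexed entries. -/
import Mathlib


/-- Elementary Schur polynomials `s_m`, defined in any associative `ℂ`-algebra by the
generating-function recursion `m*s_m = ∑_{k=1}^m k*x_k*s_{m-k}`, which for commuting
arguments is equivalent to `exp(∑_{k≥1} x_k z^k) = ∑_{m≥0} s_m(x) z^m`.
The argument sequence is indexed so that `x (k+1)` is `x_{k+1}`; `x 0` is ignored. -/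
noncomputable def schur {A : Type*} [Ring A] [Algebra ℂ A] (x : ℕ → A) : ℕ → A
  | 0 => 1
  | m + 1 =>
      ((m + 1 : ℂ))⁻¹ • ∑ k ∈ Finset.range (m + 1), ((k + 1 : ℂ)) • (x (k + 1) * schur x (m - k))
  decreasing_by exact Nat.lt_succ_of_le (Nat.sub_le m k)

lemma schur_rec (x : ℕ → ℂ) (m : ℕ) :
    ((m : ℂ) + 1) * schur x (m + 1)
      = ∑ k ∈ Finset.range (m + 1), ((k : ℂ) + 1) * x (k + 1) * schur x (m - k) := by
  rw [schur]
  rw [smul_eq_mul, ← mul_assoc, mul_inv_cancel₀ (Nat.cast_add_one_ne_zero m), one_mul]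
  simp [smul_eq_mul, mul_assoc]

noncomputable def aconv (x : ℕ → ℂ) (n : ℕ) : ℂ :=
  ∑ j ∈ Finset.range (n + 1), (-1 : ℂ) ^ j * schur x j * schur x (n - j)

open Finset in
lemma aconv_rec (x : ℕ → ℂ) (n : ℕ) :
    ((n : ℂ) + 1) * aconv x (n + 1)
      = ∑ k ∈ Finset.range (n + 1),
          ((1 + (-1 : ℂ) ^ (k + 1)) * ((k : ℂ) + 1) * x (k + 1)) * aconv x (n - k) := by
  have key : ((n : ℂ) + 1) * aconv x (n + 1)
      = (∑ j ∈ range (n + 2), (-1 : ℂ) ^ j * ((j : ℂ) * schur x j) * schur x (n + 1 - j))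
      + (∑ j ∈ range (n + 2), (-1 : ℂ) ^ j * schur x j *
          (((n + 1 - j : ℕ) : ℂ) * schur x (n + 1 - j))) := by
    rw [aconv, mul_sum, ← sum_add_distrib]
    refine sum_congr rfl fun j hj => ?_
    have hj' : j ≤ n + 1 := by simpa using Nat.lt_succ_iff.mp (mem_range.mp hj)
    have hcast : ((n + 1 - j : ℕ) : ℂ) = (n : ℂ) + 1 - (j : ℂ) := by
      push_cast [Nat.cast_sub hj']; ring
    rw [hcast]; ring
  rw [key]
  -- first sum
  have h1 : (∑ j ∈ range (n + 2), (-1 : ℂ) ^ j * ((j : ℂ) * schur x j) * schur x (n + 1 - j))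
      = ∑ k ∈ range (n + 1), (-1 : ℂ) ^ (k + 1) * (((k : ℂ) + 1) * x (k + 1)) * aconv x (n - k) := by
    have expand : (∑ i ∈ range (n + 1),
          (-1 : ℂ) ^ (i + 1) * (((i : ℂ) + 1) * schur x (i + 1)) * schur x (n - i))
        = ∑ i ∈ range (n + 1), ∑ k ∈ range (i + 1),
            (-1 : ℂ) ^ (i + 1) * (((k : ℂ) + 1) * x (k + 1) * schur x (i - k)) * schur x (n - i) := by
      refine sum_congr rfl fun i hi => ?_
      rw [schur_rec, mul_sum, sum_mul]
    rw [Finset.sum_range_succ' _ (n + 1)]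
    simp only [Nat.cast_zero, zero_mul, mul_zero, zero_add, add_zero, Nat.succ_sub_succ]
    push_cast
    rw [expand]
    rw [sum_comm' (t' := range (n + 1)) (s' := fun k => Finset.Ico k (n + 1))
      (fun i k => by simp only [mem_range, mem_Ico]; omega)]
    refine sum_congr rfl fun k hk => ?_
    have hk' : k ≤ n := Nat.lt_succ_iff.mp (mem_range.mp hk)
    rw [sum_Ico_eq_sum_range]
    have hrange : n + 1 - k = (n - k) + 1 := by omega
    rw [hrange, aconv, mul_sum]
    refine sum_congr rfl fun t ht => ?_
    have e1 : k + t - k = t := by omega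
    have e2 : n - (k + t) = (n - k) - t := by omega
    rw [e1, e2, pow_add]
    ring
  -- second sum
  have h2 : (∑ j ∈ range (n + 2), (-1 : ℂ) ^ j * schur x j *
        (((n + 1 - j : ℕ) : ℂ) * schur x (n + 1 - j)))
      = ∑ k ∈ range (n + 1), (((k : ℂ) + 1) * x (k + 1)) * aconv x (n - k) := by
    have step : ∀ j ∈ range (n + 1),
        (-1 : ℂ) ^ j * schur x j * (((n + 1 - j : ℕ) : ℂ) * schur x (n + 1 - j))
        = ∑ k ∈ range ((n - j) + 1),
            (-1 : ℂ) ^ j * schur x j * (((k : ℂ) + 1) * x (k + 1) * schur x ((n - j) - k)) := by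
      intro j hj
      have hj' : j ≤ n := Nat.lt_succ_iff.mp (mem_range.mp hj)
      have e1 : n + 1 - j = (n - j) + 1 := by omega
      have e2 : ((((n - j) : ℕ) + 1 : ℕ) : ℂ) = (((n - j) : ℕ) : ℂ) + 1 := by push_cast; ring
      rw [e1, e2, schur_rec, mul_sum]
    rw [Finset.sum_range_succ]
    simp only [Nat.sub_self, Nat.cast_zero, zero_mul, mul_zero, add_zero]
    rw [sum_congr rfl step]
    rw [sum_comm' (t' := range (n + 1)) (s' := fun k => range ((n - k) + 1))
      (fun j k => by simp only [mem_range]; omega)]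
    refine sum_congr rfl fun k hk => ?_
    rw [aconv, mul_sum]
    refine sum_congr rfl fun j hj => ?_
    have : (n - j) - k = (n - k) - j := by omega
    rw [this]; ring
  rw [h1, h2, ← sum_add_distrib]
  exact sum_congr rfl fun k hk => by ring

lemma sum_range_double {M : Type*} [AddCommMonoid M] (f : ℕ → M) (m : ℕ) :
    ∑ k ∈ Finset.range (2 * m), f k = ∑ i ∈ Finset.range m, (f (2 * i) + f (2 * i + 1)) := by
  induction m with
  | zero => simp
  | succ m ih =>
    rw [Finset.sum_range_succ, ← ih, show 2 * (m + 1) = (2 * m) + 1 + 1 by ring,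
      Finset.sum_range_succ, Finset.sum_range_succ, add_assoc]

open Finset in
lemma aconv_eq (x : ℕ → ℂ) (n : ℕ) :
    aconv x n = if n % 2 = 0 then schur (fun i => 2 * x (2 * i)) (n / 2) else 0 := by
  set v : ℕ → ℂ := fun i => 2 * x (2 * i) with hv
  induction n using Nat.strong_induction_on with
  | _ n ih =>
    match n with
    | 0 => simp [aconv, schur]
    | m + 1 =>
      have hrec := aconv_rec x m
      rcases Nat.even_or_odd m with hm | hm
      · -- m even, m+1 odd : result is 0
        obtain ⟨t, rfl⟩ : ∃ t, m = 2 * t := ⟨m / 2, by obtain ⟨a, rfl⟩ := hm; omega⟩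
        rw [if_neg (by omega)]
        have hS : ∑ k ∈ range (2 * t + 1),
            ((1 + (-1 : ℂ) ^ (k + 1)) * ((k : ℂ) + 1) * x (k + 1)) * aconv x (2 * t - k) = 0 := by
          refine sum_eq_zero fun k hk => ?_
          rcases Nat.even_or_odd k with hk2 | hk2
          · obtain ⟨a, rfl⟩ := hk2
            have : (-1 : ℂ) ^ (a + a + 1) = -1 := Odd.neg_one_pow ⟨a, by ring⟩
            rw [this]; ring
          · obtain ⟨a, rfl⟩ := hk2
            have hkm : 2 * a + 1 ≤ 2 * t := Nat.lt_succ_iff.mp (mem_range.mp hk)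
            have : aconv x (2 * t - (2 * a + 1)) = 0 := by
              rw [ih (2 * t - (2 * a + 1)) (by omega), if_neg (by omega)]
            rw [this, mul_zero]
        rw [hS] at hrec
        exact (mul_eq_zero.mp hrec).resolve_left (Nat.cast_add_one_ne_zero (2 * t))
      · -- m odd : m = 2u+1, m+1 = 2(u+1)
        obtain ⟨u, rfl⟩ : ∃ u, m = 2 * u + 1 := hm
        rw [if_pos (by omega), show (2 * u + 1 + 1) / 2 = u + 1 by omega]
        have hS : ∑ k ∈ range (2 * u + 1 + 1),
            ((1 + (-1 : ℂ) ^ (k + 1)) * ((k : ℂ) + 1) * x (k + 1)) * aconv x (2 * u + 1 - k)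
            = 2 * (((u : ℂ) + 1) * schur v (u + 1)) := by
          rw [show 2 * u + 1 + 1 = 2 * (u + 1) by ring, sum_range_double, schur_rec, mul_sum]
          refine sum_congr rfl fun i hi => ?_
          have hiu : i ≤ u := Nat.lt_succ_iff.mp (mem_range.mp hi)
          have e1 : (-1 : ℂ) ^ (2 * i + 1) = -1 := Odd.neg_one_pow ⟨i, by ring⟩
          have e2 : (-1 : ℂ) ^ (2 * i + 1 + 1) = 1 := Even.neg_one_pow ⟨i + 1, by ring⟩
          have e3 : 2 * u + 1 - (2 * i + 1) = 2 * (u - i) := by omega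
          have e4 : aconv x (2 * (u - i)) = schur v (u - i) := by
            rw [ih (2 * (u - i)) (by omega), if_pos (by omega),
              show 2 * (u - i) / 2 = u - i by omega]
          rw [e1, e2, e3, e4]
          have e5 : v (i + 1) = 2 * x (2 * i + 1 + 1) := by
            rw [hv]; norm_num; ring_nf
          rw [e5]
          push_cast
          ring
        rw [hS] at hrec
        have hcoef : ((2 * u + 1 : ℕ) : ℂ) + 1 = 2 * ((u : ℂ) + 1) := by push_cast; ring
        rw [hcoef] at hrec
        exact mul_left_cancel₀ (mul_ne_zero two_ne_zero (Nat.cast_add_one_ne_zero u))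
          (hrec.trans (by ring))

/-- for every `k ≥ 0`,
`∑_{j=0}^{2k} (-1)^j s_j(x) s_{2k-j}(x) = s_k(v)` where `v_i = 2 x_{2i}`. -/
theorem schur_alternating_convolution_even (k : ℕ) (x : ℕ → ℂ) :
    ∑ j ∈ Finset.range (2 * k + 1), (-1 : ℂ) ^ j * schur x j * schur x (2 * k - j) =
      schur (fun i => 2 * x (2 * i)) k := by
  have := aconv_eq x (2 * k)
  rw [if_pos (by omega), show 2 * k / 2 = k by omega] at this
  simpa [aconv] using this
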